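/- Let k, p, k_1 be real numbers and H_1 the degree-8 polynomial in x_{23} from the Einstein system for SO(k_1 + (p-1)k). Then H_1(1) = (k-1)(k - k_1)(kp - k + k_1 - 1)(kp - k + k_1)^2. In particular, if k ≥ 3, p ≥ 3, and k_1 > k, then H_1(1) < 0, and if k_1 = k then H_1(1) = 0. -/
import Mathlib


set_option maxHeartbeats 1000000
set_option maxRecDepth 10000

/-- Coefficient of `x^8` in the polynomial `H₁`. -/
noncomputable def H1c8 (k p k1 : ℝ) : ℝ :=
  k1^2*(p*k-2*k+k1)*(p^2*k^2-3*p*k^2+2*k^2-k1*k+k1*p*k+k1^2-k1)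

/-- Coefficient of `x^7` in the polynomial `H₁`. -/
noncomputable def H1c7 (k p k1 : ℝ) : ℝ :=
  -2*k1^2*(p*k-k+k1-2)*(2*p^2*k^2-6*p*k^2+4*k^2-2*k1*k+2*k1*p*k+k1^2-k1)

/-- Coefficient of `x^6` in the polynomial `H₁`. -/
noncomputable def H1c6 (k p k1 : ℝ) : ℝ :=
  k1*(2*p^4*k^4-10*p^3*k^4+18*p^2*k^4-14*p*k^4+4*k^4+10*k1*p^3*k^3-4*p^3*k^3-28*k1*p^2*k^3+14*p^2*k^3-2*k1*k^3+20*k1*p*k^3-14*p*k^3+4*k^3+5*k1^2*k^2+15*k1^2*p^2*k^2-35*k1*p^2*k^2+4*p^2*k^2-41*k1*k^2-23*k1^2*p*k^2+79*k1*p*k^2-12*p*k^2+8*k^2-2*k1^3*k+39*k1^2*k-33*k1*k+8*k1^3*p*k-40*k1^2*p*k+28*k1*p*k+k1^4-16*k1^3+19*k1^2-4*k1)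

/-- Coefficient of `x^5` in the polynomial `H₁`. -/
noncomputable def H1c5 (k p k1 : ℝ) : ℝ :=
  -2*k1*(p*k-k+k1-2)*(4*p^3*k^3-12*p^2*k^3+10*p*k^3-2*k^3+6*k1*p^2*k^2-8*p^2*k^2-2*k1*k^2-4*k1*p*k^2+18*p*k^2-10*k^2+k1^2*k+15*k1*k+3*k1^2*p*k-19*k1*p*k+4*p*k-4*k-8*k1^2+8*k1)

/-- Coefficient of `x^4` in the polynomial `H₁`. -/
noncomputable def H1c4 (k p k1 : ℝ) : ℝ :=
  (p^5*k^5-5*p^4*k^5+10*p^3*k^5-10*p^2*k^5+5*p*k^5-k^5+14*k1*p^4*k^4-4*p^4*k^4-38*k1*p^3*k^4+14*p^3*k^4+24*k1*p^2*k^4-18*p^2*k^4-10*k1*k^4+10*k1*p*k^4+10*p*k^4-2*k^4+25*k1^2*p^3*k^3-83*k1*p^3*k^3+8*p^3*k^3+8*k1^2*k^3-36*k1^2*p^2*k^3+204*k1*p^2*k^3-20*p^2*k^3+37*k1*k^3+3*k1^2*p*k^3-158*k1*p*k^3+17*p*k^3-5*k^3-3*k1^3*k^2-38*k1^2*k^2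+14*k1^3*p^2*k^2-122*k1^2*p^2*k^2+152*k1*p^2*k^2-8*p^2*k^2+101*k1*k^2-2*k1^3*p*k^2+150*k1^2*p*k^2-252*k1*p*k^2+12*p*k^2-4*k^2+12*k1^3*k-116*k1^2*k+100*k1*k+2*k1^4*p*k-60*k1^3*p*k+174*k1^2*p*k-112*k1*p*k+4*p*k-4*k-4*k1^4+60*k1^3-76*k1^2+20*k1)

/-- Coefficient of `x^3` in the polynomial `H₁`. -/
noncomputable def H1c3 (k p k1 : ℝ) : ℝ :=
  -2*(p*k-k+k1-2)*(2*p^4*k^4-6*p^3*k^4+6*p^2*k^4-2*p*k^4+6*k1*p^3*k^3-8*p^3*k^3-2*k1*p^2*k^3+18*p^2*k^3+4*k1*k^3-8*k1*p*k^3-14*p*k^3+4*k^3-2*k1^2*k^2+3*k1^2*p^2*k^2-35*k1*p^2*k^2+12*p^2*k^2-2*k1*k^2+2*k1^2*p*k^2+34*k1*p*k^2-16*p*k^2+4*k^2+2*k1^2*k-34*k1*k-16*k1^2*p*k+48*k1*p*k-8*p*k+8*k+16*k1^2-16*k1)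

/-- Coefficient of `x^2` in the polynomial `H₁`. -/
noncomputable def H1c2 (k p k1 : ℝ) : ℝ :=
  (6*p^5*k^5-16*p^4*k^5+8*p^3*k^5+12*p^2*k^5-14*p*k^5+4*k^5+13*k1*p^4*k^4-49*p^4*k^4-15*k1*p^3*k^4+127*p^3*k^4-7*k1*p^2*k^4-109*p^2*k^4+2*k1*k^4+7*k1*p*k^4+33*p*k^4-2*k^4+8*k1^2*p^3*k^3-96*k1*p^3*k^3+140*p^3*k^3-4*k1^2*k^3+2*k1^2*p^2*k^3+117*k1*p^2*k^3-283*p^2*k^3-26*k1*k^3-6*k1^2*p*k^3+5*k1*p*k^3+169*p*k^3-26*k^3+32*k1^2*k^2+k1^3*p^2*k^2-56*k1^2*p^2*k^2+243*k1*p^2*k^2-188*p^2*k^2+44*k1*k^2+8*k1^2*p*k^2-268*k1*p*k^2+276*p*k^2-92*k^2-56*k1^2*k+164*k1*k-4*k1^3*p*k+120*k1^2*p*k-240*k1*p*k+108*p*k-92*k+4*k1^3-64*k1^2+76*k1-16)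

/-- Coefficient of `x^1` in the polynomial `H₁`. -/
noncomputable def H1c1 (k p k1 : ℝ) : ℝ :=
  -2*(k*p-2)*(p*k-k+k1-2)*(2*p*k-2*k+k1-1)*(p^2*k^2+p*k^2-2*k^2-6*p*k+4*k+4)

/-- Coefficient of `x^0` in the polynomial `H₁`. -/
noncomputable def H1c0 (k p k1 : ℝ) : ℝ :=
  (p*k-k+k1-1)*(p^2*k^2+p*k^2-2*k^2-6*p*k+4*k+4)^2

/-- The degree-8 polynomial `H₁` in `x` from the Einstein system for `SO(k1 + (p-1)k)`,
with the explicit coefficient list given in the paper. -/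
noncomputable def H1 (k p k1 x : ℝ) : ℝ :=
  H1c8 k p k1 * x^8 + H1c7 k p k1 * x^7 + H1c6 k p k1 * x^6 + H1c5 k p k1 * x^5
    + H1c4 k p k1 * x^4 + H1c3 k p k1 * x^3 + H1c2 k p k1 * x^2 + H1c1 k p k1 * x
    + H1c0 k p k1

/-- Evaluation of `H₁` at `1`, with the resulting sign analysis. -/
theorem stmt_8 (k p k1 : ℝ) :
    H1 k p k1 1 = (k - 1) * (k - k1) * (k * p - k + k1 - 1) * (k * p - k + k1) ^ 2 ∧
      (3 ≤ k → 3 ≤ p → k < k1 → H1 k p k1 1 < 0) ∧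
      (k1 = k → H1 k p k1 1 = 0) := by

  have heq : H1 k p k1 1 = (k - 1) * (k - k1) * (k * p - k + k1 - 1) * (k * p - k + k1) ^ 2 := by
    simp only [H1, H1c8, H1c7, H1c6, H1c5, H1c4, H1c3, H1c2, H1c1, H1c0]
    ring
  refine ⟨heq, ?_, ?_⟩
  · intro hk hp hkk1
    rw [heq]
    have h1 : (0:ℝ) < k - 1 := by linarith
    have h2 : k - k1 < 0 := by linarith
    have h3 : (0:ℝ) < k * p - k + k1 - 1 := by nlinarith
    have h4' : (0:ℝ) < k * p - k + k1 := by nlinarith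
    have h4 : (0:ℝ) < (k * p - k + k1) ^ 2 := pow_pos h4' 2
    nlinarith [mul_pos h1 h3, mul_pos (mul_pos h1 h3) h4]
  · intro h
    rw [heq, h]
    ring
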